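/- Let k ≥ 1 and let G be a bipartite graph with parts X and Y where |X| ≥ k and |Y| ≥ k − 1. If G does not contain a path on 2k+1 vertices both of whose endpoints lie in X, then the number of edges of G satisfies e(G) ≤ (k−1)|X| + k|Y| − k(k−1). -/

import Mathlib

open SimpleGraph Finset

section Aux
variable {V : Type*} [Fintype V] [DecidableEq V]

lemma toFinset_support_concat {G : SimpleGraph V} {a b c : V} (p : G.Walk a b)
    (h : G.Adj b c) : (p.concat h).support.toFinset = insert c p.support.toFinset := by
  ext v
  rw [SimpleGraph.Walk.support_concat]
  simp [List.concat_eq_append, or_comm]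

lemma isPath_concat {G : SimpleGraph V} {a b c : V} {p : G.Walk a b} (hp : p.IsPath)
    (h : G.Adj b c) (hc : c ∉ p.support) : (p.concat h).IsPath := by
  rw [SimpleGraph.Walk.isPath_def, SimpleGraph.Walk.support_concat]
  simp [List.nodup_append, hp.support_nodup, hc]
  exact fun x hx hxc => hc (hxc ▸ hx)

/-- Greedy path building: if every vertex of `X` has at least `k` neighbours in `Y` and every
vertex of `Y` has at least `k+1` neighbours in `X`, we can build a path of length `2i`
with both endpoints in `X` for every `i ≤ k`. -/
lemma buildPath (G : SimpleGraph V) [DecidableRel G.Adj] (X Y : Finset V)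
    (hdisj : Disjoint X Y) (k : ℕ)
    (hdX : ∀ x ∈ X, k ≤ (Y.filter (fun y => G.Adj x y)).card)
    (hdY : ∀ y ∈ Y, k + 1 ≤ (X.filter (fun x => G.Adj y x)).card)
    (hXne : X.Nonempty) :
    ∀ i ≤ k, ∃ (a b : V) (p : G.Walk a b), p.IsPath ∧ p.length = 2 * i ∧ a ∈ X ∧ b ∈ X ∧
      (p.support.toFinset ∩ X).card = i + 1 ∧ ∀ v ∈ p.support, v ∈ X ∪ Y := by
  intro i
  induction i with
  | zero =>
    intro _
    obtain ⟨a, ha⟩ := hXne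
    exact ⟨a, a, SimpleGraph.Walk.nil, by simp [ha], by simp, ha, ha, by simp [ha],
      by simp [ha]⟩
  | succ i ih =>
    intro hik
    obtain ⟨a, b, p, hp, hlen, haX, hbX, hcard, hsupp⟩ := ih (by omega)
    -- S := support as a finset
    set S := p.support.toFinset with hS
    have hScard : S.card = 2 * i + 1 := by
      rw [hS, List.toFinset_card_of_nodup hp.support_nodup, SimpleGraph.Walk.length_support,
        hlen]
    have hSsub : S ⊆ X ∪ Y := by
      intro v hv; exact hsupp v (List.mem_toFinset.mp hv)
    have hSY : (S ∩ Y).card = i := by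
      have h1 : S ∩ X ∪ S ∩ Y = S := by
        rw [← Finset.inter_union_distrib_left]
        exact Finset.inter_eq_left.mpr hSsub
      have h2 : Disjoint (S ∩ X) (S ∩ Y) :=
        (hdisj.mono (Finset.inter_subset_right) (Finset.inter_subset_right))
      have := Finset.card_union_of_disjoint h2
      rw [h1, hScard, hcard] at this
      omega
    -- find a new neighbour y of b in Y outside the support
    have hbY : ∃ y ∈ Y, G.Adj b y ∧ y ∉ p.support := by
      by_contra hcon
      push_neg at hcon
      have hsub : Y.filter (fun y => G.Adj b y) ⊆ S ∩ Y := by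
        intro y hy
        rw [Finset.mem_filter] at hy
        exact Finset.mem_inter.mpr ⟨List.mem_toFinset.mpr (hcon y hy.1 hy.2), hy.1⟩
      have := Finset.card_le_card hsub
      have hk' := hdX b hbX
      omega
    obtain ⟨y, hyY, hby, hynot⟩ := hbY
    have hyX : y ∉ X := fun h => (Finset.disjoint_left.mp hdisj h) hyY
    set q := p.concat hby with hq
    have hqpath : q.IsPath := isPath_concat hp hby hynot
    have hqsupp : q.support = p.support ++ [y] := by
      rw [hq, SimpleGraph.Walk.support_concat]
    have hqS : q.support.toFinset = insert y S := toFinset_support_concat p hby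
    -- find a new neighbour x of y in X outside the support of q
    have hyXnb : ∃ x ∈ X, G.Adj y x ∧ x ∉ q.support := by
      by_contra hcon
      push_neg at hcon
      have hsub : X.filter (fun x => G.Adj y x) ⊆ q.support.toFinset ∩ X := by
        intro x hx
        rw [Finset.mem_filter] at hx
        exact Finset.mem_inter.mpr ⟨List.mem_toFinset.mpr (hcon x hx.1 hx.2), hx.1⟩
      have hcle := Finset.card_le_card hsub
      have : q.support.toFinset ∩ X = S ∩ X := by
        rw [hqS, Finset.insert_inter_of_notMem hyX]
      rw [this, hcard] at hcle
      have hk' := hdY y hyY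
      omega
    obtain ⟨x, hxX, hyx, hxnot⟩ := hyXnb
    set r := q.concat hyx with hr
    have hrpath : r.IsPath := isPath_concat hqpath hyx hxnot
    refine ⟨a, x, r, hrpath, ?_, haX, hxX, ?_, ?_⟩
    · rw [hr, SimpleGraph.Walk.length_concat, hq, SimpleGraph.Walk.length_concat, hlen]; ring
    · have hrsupp : r.support.toFinset = insert x (insert y S) := by
        rw [hr, toFinset_support_concat, hqS]
      rw [hrsupp]
      have hxS : x ∉ insert y S := by
        intro h
        rcases Finset.mem_insert.mp h with h | h
        · exact hxnot (by rw [hqsupp]; simp [h])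
        · exact hxnot (by rw [hqsupp]; simp [List.mem_toFinset.mp h])
      rw [Finset.insert_inter_of_mem hxX, Finset.insert_inter_of_notMem hyX,
        Finset.card_insert_of_notMem
          (fun h => hxS (Finset.mem_insert_of_mem (Finset.mem_of_mem_inter_left h))), hcard]
    · intro v hv
      rw [hr, SimpleGraph.Walk.support_concat] at hv
      rcases List.mem_append.mp hv with hv | hv
      · rw [hqsupp] at hv
        rcases List.mem_append.mp hv with hv | hv
        · exact hsupp v hv
        · simp at hv; subst hv; exact Finset.mem_union_right _ hyY
      · simp at hv; subst hv; exact Finset.mem_union_left _ hxX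

/-- The main induction. -/
lemma auxBound (G : SimpleGraph V) [DecidableRel G.Adj] (k : ℕ) (hk : 1 ≤ k) (X0 : Finset V)
    (hfree : ¬ ∃ (a b : V) (p : G.Walk a b),
        p.IsPath ∧ p.length + 1 = 2 * k + 1 ∧ a ∈ X0 ∧ b ∈ X0) :
    ∀ n (X Y : Finset V), X.card + Y.card ≤ n → X ⊆ X0 → Disjoint X Y →
      k ≤ X.card → k - 1 ≤ Y.card →
      (∑ y ∈ Y, (X.filter (fun x => G.Adj y x)).card) + k * (k - 1)
        ≤ (k - 1) * X.card + k * Y.card := by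
  intro n
  induction n with
  | zero =>
    intro X Y hn _ _ hXk _
    omega
  | succ n ih =>
    intro X Y hn hX0 hdisj hXk hYk
    by_cases hYsmall : Y.card ≤ k - 1
    · -- base: |Y| = k - 1
      have hsum : (∑ y ∈ Y, (X.filter (fun x => G.Adj y x)).card) ≤ (k-1) * X.card := by
        calc (∑ y ∈ Y, (X.filter (fun x => G.Adj y x)).card)
            ≤ ∑ _y ∈ Y, X.card :=
              Finset.sum_le_sum (fun y _ => Finset.card_le_card (Finset.filter_subset _ _))
          _ = Y.card * X.card := by rw [Finset.sum_const, smul_eq_mul]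
          _ ≤ (k-1) * X.card := Nat.mul_le_mul_right _ hYsmall
      have hYeq : Y.card = k - 1 := le_antisymm hYsmall hYk
      have : k * Y.card = k * (k-1) := by rw [hYeq]
      omega
    · by_cases hXsmall : X.card ≤ k
      · -- base: |X| = k
        have hXeq : X.card = k := le_antisymm hXsmall hXk
        have hsum : (∑ y ∈ Y, (X.filter (fun x => G.Adj y x)).card) ≤ k * Y.card := by
          calc (∑ y ∈ Y, (X.filter (fun x => G.Adj y x)).card)
              ≤ ∑ _y ∈ Y, k := Finset.sum_le_sum (fun y _ => by
                have := Finset.card_le_card (Finset.filter_subset (fun x => G.Adj y x) X)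
                omega)
            _ = Y.card * k := by rw [Finset.sum_const, smul_eq_mul]
            _ = k * Y.card := Nat.mul_comm _ _
        have : (k-1) * X.card = (k-1) * k := by rw [hXeq]
        have hkk : k * (k-1) = (k-1) * k := Nat.mul_comm _ _
        omega
      · push_neg at hYsmall hXsmall
        by_cases hy : ∃ y ∈ Y, (X.filter (fun x => G.Adj y x)).card ≤ k
        · -- delete a low-degree vertex of Y
          obtain ⟨y, hyY, hyd⟩ := hy
          have hsum : (X.filter (fun x => G.Adj y x)).card
                + ∑ z ∈ Y.erase y, (X.filter (fun x => G.Adj z x)).card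
              = ∑ z ∈ Y, (X.filter (fun x => G.Adj z x)).card :=
            Finset.add_sum_erase Y (fun z => (X.filter (fun x => G.Adj z x)).card) hyY
          have hrec := ih X (Y.erase y) (by
              rw [Finset.card_erase_of_mem hyY]; omega) hX0
            (hdisj.mono_right (Finset.erase_subset _ _)) hXk
            (by rw [Finset.card_erase_of_mem hyY]; omega)
          rw [Finset.card_erase_of_mem hyY] at hrec
          have h1 : 1 ≤ Y.card := Finset.card_pos.mpr ⟨y, hyY⟩
          obtain ⟨m, hm⟩ : ∃ m, Y.card = m + 1 := ⟨Y.card - 1, by omega⟩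
          have : k * Y.card = k * (Y.card - 1) + k := by
            rw [hm, Nat.add_sub_cancel, Nat.mul_add, Nat.mul_one]
          omega
        · by_cases hx : ∃ x ∈ X, (Y.filter (fun y => G.Adj x y)).card ≤ k - 1
          · -- delete a low-degree vertex of X
            obtain ⟨x, hxX, hxd⟩ := hx
            have hper : ∀ y ∈ Y, (X.filter (fun x' => G.Adj y x')).card ≤
                ((X.erase x).filter (fun x' => G.Adj y x')).card +
                  (if G.Adj x y then 1 else 0) := by
              intro y hyY
              by_cases hadj : G.Adj x y
              · simp only [hadj, if_true]
                have : X.filter (fun x' => G.Adj y x') ⊆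
                    insert x ((X.erase x).filter (fun x' => G.Adj y x')) := by
                  intro z hz
                  rw [Finset.mem_filter] at hz
                  by_cases hzx : z = x
                  · subst hzx; exact Finset.mem_insert_self _ _
                  · exact Finset.mem_insert_of_mem (Finset.mem_filter.mpr
                      ⟨Finset.mem_erase.mpr ⟨hzx, hz.1⟩, hz.2⟩)
                calc (X.filter (fun x' => G.Adj y x')).card
                    ≤ (insert x ((X.erase x).filter (fun x' => G.Adj y x'))).card :=
                      Finset.card_le_card this
                  _ ≤ ((X.erase x).filter (fun x' => G.Adj y x')).card + 1 :=
                      Finset.card_insert_le _ _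
              · simp only [hadj, if_false, add_zero]
                apply Finset.card_le_card
                intro z hz
                rw [Finset.mem_filter] at hz
                have hzx : z ≠ x := by
                  intro h; subst h; exact hadj hz.2.symm
                exact Finset.mem_filter.mpr ⟨Finset.mem_erase.mpr ⟨hzx, hz.1⟩, hz.2⟩
            have hsum1 : (∑ y ∈ Y, (X.filter (fun x' => G.Adj y x')).card)
                ≤ (∑ y ∈ Y, ((X.erase x).filter (fun x' => G.Adj y x')).card)
                  + (Y.filter (fun y => G.Adj x y)).card := by
              have := Finset.sum_le_sum hper
              rw [Finset.sum_add_distrib] at this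
              have hb : (∑ y ∈ Y, (if G.Adj x y then 1 else 0))
                  = (Y.filter (fun y => G.Adj x y)).card := by
                rw [Finset.card_filter]
              omega
            have hrec := ih (X.erase x) Y (by
                rw [Finset.card_erase_of_mem hxX]; omega)
              ((Finset.erase_subset _ _).trans hX0)
              (hdisj.mono_left (Finset.erase_subset _ _))
              (by rw [Finset.card_erase_of_mem hxX]; omega) hYk
            rw [Finset.card_erase_of_mem hxX] at hrec
            have h1 : 1 ≤ X.card := by omega
            obtain ⟨m, hm⟩ : ∃ m, X.card = m + 1 := ⟨X.card - 1, by omega⟩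
            have : (k-1) * X.card = (k-1) * (X.card - 1) + (k-1) := by
              rw [hm, Nat.add_sub_cancel, Nat.mul_add, Nat.mul_one]
            omega
          · -- min degree case: build a path, contradiction
            exfalso
            push_neg at hy hx
            have hdX : ∀ x ∈ X, k ≤ (Y.filter (fun y => G.Adj x y)).card := by
              intro x hxX
              have := hx x hxX
              omega
            have hdY : ∀ y ∈ Y, k + 1 ≤ (X.filter (fun x => G.Adj y x)).card := by
              intro y hyY
              exact hy y hyY
            have hXne : X.Nonempty := Finset.card_pos.mp (by omega)
            obtain ⟨a, b, p, hp, hlen, haX, hbX, -, -⟩ :=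
              buildPath G X Y hdisj k hdX hdY hXne k le_rfl
            exact hfree ⟨a, b, p, hp, by omega, hX0 haX, hX0 hbX⟩

end Aux

/-- Let `k ≥ 1` and let `G` be a bipartite graph with parts `X` and `Y` where `|X| ≥ k` and
`|Y| ≥ k - 1`.  If `G` contains no path on `2k+1` vertices with both endpoints in `X`, then
`e(G) ≤ (k-1)|X| + k|Y| - k(k-1)` (stated with the subtracted term moved to the left-hand
side to avoid truncated natural subtraction). -/
theorem leastEigenvalue_stmt0 {V : Type*} [Fintype V] [DecidableEq V]
    (G : SimpleGraph V) [DecidableRel G.Adj]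
    (X Y : Finset V) (hdisj : Disjoint X Y) (hcover : X ∪ Y = Finset.univ)
    (hbip : ∀ v w : V, G.Adj v w → ((v ∈ X ∧ w ∈ Y) ∨ (v ∈ Y ∧ w ∈ X)))
    (k : ℕ) (hk : 1 ≤ k) (hX : k ≤ X.card) (hY : k - 1 ≤ Y.card)
    (hfree : ¬ ∃ (a b : V) (p : G.Walk a b),
        p.IsPath ∧ p.length + 1 = 2 * k + 1 ∧ a ∈ X ∧ b ∈ X) :
    G.edgeFinset.card + k * (k - 1) ≤ (k - 1) * X.card + k * Y.card := by
  -- First: e(G) = ∑_{y ∈ Y} |N(y) ∩ X|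
  have hXdeg : ∀ x ∈ X, G.degree x = (Y.filter (fun y => G.Adj x y)).card := by
    intro x hxX
    rw [SimpleGraph.degree, SimpleGraph.neighborFinset]
    congr 1
    ext w
    simp only [Set.mem_toFinset, SimpleGraph.mem_neighborSet, Finset.mem_filter]
    constructor
    · intro h
      rcases hbip x w h with ⟨_, hwY⟩ | ⟨hxY, _⟩
      · exact ⟨hwY, h⟩
      · exact absurd hxX (Finset.disjoint_right.mp hdisj hxY)
    · exact fun h => h.2
  have hYdeg : ∀ y ∈ Y, G.degree y = (X.filter (fun x => G.Adj y x)).card := by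
    intro y hyY
    rw [SimpleGraph.degree, SimpleGraph.neighborFinset]
    congr 1
    ext w
    simp only [Set.mem_toFinset, SimpleGraph.mem_neighborSet, Finset.mem_filter]
    constructor
    · intro h
      rcases hbip y w h with ⟨hyX, _⟩ | ⟨_, hwX⟩
      · exact absurd hyY (Finset.disjoint_left.mp hdisj hyX)
      · exact ⟨hwX, h⟩
    · exact fun h => h.2
  have hswap : (∑ x ∈ X, (Y.filter (fun y => G.Adj x y)).card)
      = (∑ y ∈ Y, (X.filter (fun x => G.Adj y x)).card) := by
    simp_rw [Finset.card_filter]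
    rw [Finset.sum_comm]
    apply Finset.sum_congr rfl
    intro y _
    apply Finset.sum_congr rfl
    intro x _
    simp [SimpleGraph.adj_comm]
  have hsplit : (∑ v, G.degree v) = (∑ x ∈ X, G.degree x) + (∑ y ∈ Y, G.degree y) := by
    rw [← Finset.sum_union hdisj, hcover]
  have hdoub := G.sum_degrees_eq_twice_card_edges
  have hE : G.edgeFinset.card = ∑ y ∈ Y, (X.filter (fun x => G.Adj y x)).card := by
    have h1 : (∑ x ∈ X, G.degree x) = ∑ x ∈ X, (Y.filter (fun y => G.Adj x y)).card :=
      Finset.sum_congr rfl hXdeg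
    have h2 : (∑ y ∈ Y, G.degree y) = ∑ y ∈ Y, (X.filter (fun x => G.Adj y x)).card :=
      Finset.sum_congr rfl hYdeg
    omega
  rw [hE]
  exact auxBound G k hk X hfree (X.card + Y.card) X Y le_rfl (Finset.Subset.refl X) hdisj hX hY
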